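/- For 1 ≤ y ≤ M-1, the beta-binomial probability C(M,y)·Γ(θ)/(Γ(αθ)Γ(βθ))·Γ(y+αθ)Γ(M-y+βθ)/Γ(M+θ), viewed as a function of θ at fixed α, satisfies: its limit as θ→0⁺ is 0 and its derivative at θ=0 is αβ·M/(y(M-y)); equivalently it equals αβθ·M/(y(M-y)) + O(θ²). -/

import Mathlib

/-- The beta-binomial probability of a polymorphic sample as a function of `θ`. -/
noncomputable def betaBinom (α : ℝ) (M y : ℕ) (θ : ℝ) : ℝ :=
  (Nat.choose M y : ℝ) * Real.Gamma θ /
      (Real.Gamma (α * θ) * Real.Gamma ((1 - α) * θ)) *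
    (Real.Gamma ((y : ℝ) + α * θ) * Real.Gamma ((M : ℝ) - y + (1 - α) * θ) /
      Real.Gamma ((M : ℝ) + θ))

private lemma contGammaComp (f : ℝ → ℝ) (hf : ContinuousAt f 0) (h : 0 < f 0) :
    ContinuousAt (fun θ => Real.Gamma (f θ)) 0 := by
  refine (Real.differentiableAt_Gamma fun n => ?_).continuousAt.comp hf
  have : (0:ℝ) ≤ n := n.cast_nonneg
  intro hc; rw [hc] at h; linarith

/-- For a polymorphic sample `1 ≤ y ≤ M-1`, the beta-binomial probability tends
to `0` as `θ → 0⁺` and its (right-)derivative at `θ = 0` is `αβ·M/(y(M-y))`;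
i.e. it equals `αβθ·M/(y(M-y)) + O(θ²)`. -/
theorem betaBinom_polymorphic_small_theta (α β : ℝ) (hα : 0 < α) (hα1 : α < 1)
    (hβ : β = 1 - α) (M y : ℕ) (hM : 2 ≤ M) (hy1 : 1 ≤ y) (hy2 : y ≤ M - 1) :
    Filter.Tendsto (betaBinom α M y) (nhdsWithin 0 (Set.Ioi 0)) (nhds 0) ∧
    Filter.Tendsto (fun θ => betaBinom α M y θ / θ) (nhdsWithin 0 (Set.Ioi 0))
      (nhds (α * β * (M : ℝ) / ((y : ℝ) * ((M : ℝ) - y)))) := by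
  subst hβ
  have hβ : 0 < 1 - α := by linarith
  have hyM : y + 1 ≤ M := by omega
  have hyMr : (y : ℝ) < (M : ℝ) := by exact_mod_cast Nat.lt_of_lt_of_le (Nat.lt_succ_self y) hyM
  have hyr : (1:ℝ) ≤ (y:ℝ) := by exact_mod_cast hy1
  have hMr : (0:ℝ) < (M:ℝ) := by positivity
  -- the regularised function
  set g : ℝ → ℝ := fun θ =>
    (Nat.choose M y : ℝ) * (α * (1 - α)) *
      (Real.Gamma (θ + 1) * (Real.Gamma ((y : ℝ) + α * θ) *
        Real.Gamma ((M : ℝ) - y + (1 - α) * θ)) /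
      (Real.Gamma (α * θ + 1) * Real.Gamma ((1 - α) * θ + 1) *
        Real.Gamma ((M : ℝ) + θ))) with hg
  have hcont : ContinuousAt g 0 := by
    have h1 : ContinuousAt (fun θ : ℝ => Real.Gamma (θ + 1)) 0 :=
      contGammaComp _ (by fun_prop) (by norm_num)
    have h2 : ContinuousAt (fun θ : ℝ => Real.Gamma ((y:ℝ) + α * θ)) 0 :=
      contGammaComp _ (by fun_prop) (by simp; linarith)
    have h3 : ContinuousAt (fun θ : ℝ => Real.Gamma ((M:ℝ) - y + (1 - α) * θ)) 0 :=
      contGammaComp _ (by fun_prop) (by simp; linarith)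
    have h4 : ContinuousAt (fun θ : ℝ => Real.Gamma (α * θ + 1)) 0 :=
      contGammaComp _ (by fun_prop) (by norm_num)
    have h5 : ContinuousAt (fun θ : ℝ => Real.Gamma ((1 - α) * θ + 1)) 0 :=
      contGammaComp _ (by fun_prop) (by norm_num)
    have h6 : ContinuousAt (fun θ : ℝ => Real.Gamma ((M:ℝ) + θ)) 0 :=
      contGammaComp _ (by fun_prop) (by simpa using hMr)
    have hden : (Real.Gamma (α * 0 + 1) * Real.Gamma ((1 - α) * 0 + 1) *
        Real.Gamma ((M : ℝ) + 0)) ≠ 0 := by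
      have := Real.Gamma_pos_of_pos (show (0:ℝ) < α * 0 + 1 by norm_num)
      have := Real.Gamma_pos_of_pos (show (0:ℝ) < (1-α) * 0 + 1 by norm_num)
      have := Real.Gamma_pos_of_pos (show (0:ℝ) < (M:ℝ) + 0 by simpa using hMr)
      positivity
    exact (continuousAt_const.mul
      ((h1.mul (h2.mul h3)).div ((h4.mul h5).mul h6) hden))
  -- value of g at 0
  have hg0 : g 0 = α * (1 - α) * (M : ℝ) / ((y : ℝ) * ((M : ℝ) - y)) := by
    obtain ⟨k, rfl⟩ : ∃ k, y = k + 1 := ⟨y - 1, by omega⟩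
    obtain ⟨n, rfl⟩ : ∃ n, M = (k + 1) + (n + 1) := ⟨M - k - 2, by omega⟩
    have e1 : ((k:ℝ) + 1) + α * 0 = (k:ℝ) + 1 := by ring
    have e2 : ((((k+1)+(n+1) : ℕ)):ℝ) - ((k+1:ℕ):ℝ) + (1 - α) * 0 = (n:ℝ) + 1 := by
      push_cast; ring
    have e3 : ((((k+1)+(n+1) : ℕ)):ℝ) + 0 = ((k + n + 1 : ℕ):ℝ) + 1 := by push_cast; ring
    have e4 : ((k+1:ℕ):ℝ) = (k:ℝ) + 1 := by push_cast; ring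
    simp only [hg, e4] at *
    rw [e1, e2, e3]
    rw [Real.Gamma_nat_eq_factorial, Real.Gamma_nat_eq_factorial,
      Real.Gamma_nat_eq_factorial]
    simp only [zero_add, mul_zero, Real.Gamma_one, one_mul]
    have hch : ((k+1+(n+1)).choose (k+1) : ℝ) * (Nat.factorial (k+1) : ℝ) *
        (Nat.factorial (n+1) : ℝ) = (Nat.factorial (k+1+(n+1)) : ℝ) := by
      have h := Nat.choose_mul_factorial_mul_factorial (show k+1 ≤ k+1+(n+1) by omega)
      rw [show k+1+(n+1)-(k+1) = n+1 by omega] at h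
      exact_mod_cast h
    have hf1 : (Nat.factorial (k+1) : ℝ) = ((k:ℝ)+1) * (Nat.factorial k : ℝ) := by
      push_cast [Nat.factorial_succ]; ring
    have hf2 : (Nat.factorial (n+1) : ℝ) = ((n:ℝ)+1) * (Nat.factorial n : ℝ) := by
      push_cast [Nat.factorial_succ]; ring
    have hf3 : (Nat.factorial (k+1+(n+1)) : ℝ)
        = ((k:ℝ)+(n:ℝ)+2) * (Nat.factorial (k+n+1) : ℝ) := by
      have : k+1+(n+1) = (k+n+1) + 1 := by omega
      rw [this]; push_cast [Nat.factorial_succ]; ring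
    have hfk : (0:ℝ) < (Nat.factorial k : ℝ) := by positivity
    have hfn : (0:ℝ) < (Nat.factorial n : ℝ) := by positivity
    have hfm : (0:ℝ) < (Nat.factorial (k+n+1) : ℝ) := by positivity
    rw [hf1, hf2, hf3] at hch
    push_cast
    have hk1 : (0:ℝ) < (k:ℝ) + 1 := by positivity
    have hn1 : (0:ℝ) < (n:ℝ) + 1 := by positivity
    field_simp
    linear_combination hch
  -- g tends to this value
  have hgt : Filter.Tendsto g (nhdsWithin 0 (Set.Ioi 0))
      (nhds (α * (1 - α) * (M : ℝ) / ((y : ℝ) * ((M : ℝ) - y)))) := by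
    rw [← hg0]
    exact hcont.continuousWithinAt.tendsto
  -- eventual equality
  have heq : ∀ θ ∈ Set.Ioi (0:ℝ), betaBinom α M y θ / θ = g θ := by
    intro θ hθ
    have hθ0 : (0:ℝ) < θ := hθ
    have hαθ : (0:ℝ) < α * θ := by positivity
    have hβθ : (0:ℝ) < (1 - α) * θ := mul_pos hβ hθ0
    have G1 : Real.Gamma (θ + 1) = θ * Real.Gamma θ := Real.Gamma_add_one hθ0.ne'
    have G2 : Real.Gamma (α * θ + 1) = (α * θ) * Real.Gamma (α * θ) :=
      Real.Gamma_add_one hαθ.ne'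
    have G3 : Real.Gamma ((1 - α) * θ + 1) = ((1 - α) * θ) * Real.Gamma ((1 - α) * θ) :=
      Real.Gamma_add_one hβθ.ne'
    have p1 := Real.Gamma_pos_of_pos hθ0
    have p2 := Real.Gamma_pos_of_pos hαθ
    have p3 := Real.Gamma_pos_of_pos hβθ
    have p4 := Real.Gamma_pos_of_pos (show (0:ℝ) < (M:ℝ) + θ by positivity)
    simp only [hg, betaBinom, G1, G2, G3]
    field_simp
  have hfin : Filter.Tendsto (fun θ => betaBinom α M y θ / θ)
      (nhdsWithin 0 (Set.Ioi 0))
      (nhds (α * (1 - α) * (M : ℝ) / ((y : ℝ) * ((M : ℝ) - y)))) := by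
    refine hgt.congr' ?_
    filter_upwards [self_mem_nhdsWithin] with θ hθ using (heq θ hθ).symm
  refine ⟨?_, hfin⟩
  have : Filter.Tendsto (fun θ : ℝ => (betaBinom α M y θ / θ) * θ)
      (nhdsWithin 0 (Set.Ioi 0)) (nhds (α * (1 - α) * (M : ℝ) / ((y : ℝ) * ((M : ℝ) - y)) * 0)) :=
    hfin.mul (tendsto_nhdsWithin_of_tendsto_nhds Filter.tendsto_id)
  rw [mul_zero] at this
  refine this.congr' ?_
  filter_upwards [self_mem_nhdsWithin] with θ hθ
  have : (θ:ℝ) ≠ 0 := ne_of_gt hθ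
  field_simp
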